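/- Lemma 6.1: ℙ({x ∈ Δ(R,[0,r]) : K(t;x) ≥ γ for every t ∈ [0,r]}) ≤ exp(−(β/2)(γ²−1)(R−γ)) · exp(2R + γ·ln γ). -/

import Mathlib

open Real MeasureTheory
open scoped ENNReal

namespace JelliumAux

lemma card_le_of_lt {R : ℕ} (T : Finset (Fin R)) (m : ℕ)
    (h : ∀ i ∈ T, (i : ℕ) < m) : T.card ≤ m := by
  classical
  have h1 : T.card = (T.image Fin.val).card :=
    (Finset.card_image_of_injective _ Fin.val_injective).symm
  rw [h1]
  have hsub : T.image Fin.val ⊆ Finset.range m := by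
    intro k hk
    simp only [Finset.mem_image] at hk
    obtain ⟨i, hi, rfl⟩ := hk
    exact Finset.mem_range.2 (h i hi)
  simpa using Finset.card_le_card hsub

lemma le_card_of_lt {R : ℕ} (T : Finset (Fin R)) (m : ℕ) (hm : m ≤ R)
    (h : ∀ i : Fin R, (i : ℕ) < m → i ∈ T) : m ≤ T.card := by
  classical
  have hsub : (Finset.univ.map (Fin.castLEEmb hm)) ⊆ T := by
    intro i hi
    simp only [Finset.mem_map, Finset.mem_univ, true_and] at hi
    obtain ⟨k, rfl⟩ := hi
    exact h _ k.isLt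
  have := Finset.card_le_card hsub
  simpa using this

lemma sumsq (η : ℝ) (n : ℕ) :
    ∑ j ∈ Finset.range n, (((j:ℝ)+1)+η)^2
      = n*(n+1)*(2*n+1)/6 + η*n*(n+1) + n*η^2 := by
  induction n with
  | zero => simp
  | succ n ih =>
    rw [Finset.sum_range_succ, ih]
    push_cast
    ring

lemma isq (a b s : ℝ) : (∫ t in a..b, (t - s)^2) = ((b-s)^3 - (a-s)^3)/3 := by
  rw [intervalIntegral.integral_comp_sub_right (fun u => u^2) s, integral_pow]
  norm_num

lemma isq_intable (a b s : ℝ) : IntervalIntegrable (fun t => (t - s)^2) volume a b := by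
  apply Continuous.intervalIntegrable
  fun_prop




lemma volume_simplex_le (R : ℕ) (r : ℝ) (hr : 0 ≤ r) :
    volume {x : Fin R → ℝ | StrictMono x ∧ ∀ i, x i ∈ Set.Ioo 0 r}
      ≤ ENNReal.ofReal (r ^ R / R.factorial) := by
  classical
  set C : Set (Fin R → ℝ) := Set.univ.pi fun _ => Set.Ioo (0:ℝ) r with hC
  set S : Equiv.Perm (Fin R) → Set (Fin R → ℝ) :=
    fun σ => {x | StrictMono (x ∘ σ)} ∩ C with hS
  have hmono_meas : ∀ σ : Equiv.Perm (Fin R),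
      MeasurableSet {x : Fin R → ℝ | StrictMono (x ∘ σ)} := by
    intro σ
    have hset : {x : Fin R → ℝ | StrictMono (x ∘ σ)}
        = ⋂ (p : Fin R × Fin R) (_ : p.1 < p.2), {x | x (σ p.1) < x (σ p.2)} := by
      ext x
      simp only [Set.mem_setOf_eq, Set.mem_iInter, StrictMono, Function.comp]
      exact ⟨fun h p hp => h hp, fun h a b hab => h ⟨a, b⟩ hab⟩
    rw [hset]
    refine MeasurableSet.iInter fun p => MeasurableSet.iInter fun _ => ?_
    exact measurableSet_lt (measurable_pi_apply _) (measurable_pi_apply _)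
  have hCmeas : MeasurableSet C := MeasurableSet.univ_pi fun _ => measurableSet_Ioo
  have hSmeas : ∀ σ, MeasurableSet (S σ) := fun σ => (hmono_meas σ).inter hCmeas
  have hvol : ∀ σ, volume (S σ) = volume (S 1) := by
    intro σ
    have hmp := MeasureTheory.volume_measurePreserving_piCongrLeft (fun _ : Fin R => ℝ) σ
    set Φ := MeasurableEquiv.piCongrLeft (fun _ : Fin R => ℝ) σ with hΦ
    have happ : ∀ (y : Fin R → ℝ) (i : Fin R), Φ y (σ i) = y i := by
      intro y i
      simp [hΦ, MeasurableEquiv.piCongrLeft, Equiv.piCongrLeft_apply_apply]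
    have hpre : Φ ⁻¹' (S σ) = S 1 := by
      ext y
      have hcomp : (Φ y) ∘ σ = y := funext fun i => happ y i
      constructor
      · rintro ⟨h1, h2⟩
        refine ⟨by simpa [hcomp] using h1, fun i _ => ?_⟩
        have := h2 (σ i) (Set.mem_univ _)
        simpa [happ] using this
      · rintro ⟨h1, h2⟩
        constructor
        · simpa [hcomp] using h1
        · intro i _
          have : Φ y i = y (σ.symm i) := by
            conv_lhs => rw [show i = σ (σ.symm i) by simp]
            rw [happ]
          rw [this]
          exact h2 _ (Set.mem_univ _)
    calc volume (S σ) = volume (Φ ⁻¹' (S σ)) :=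
          (hmp.measure_preimage (hSmeas σ).nullMeasurableSet).symm
      _ = volume (S 1) := by rw [hpre]
  have hdisj : Pairwise (Function.onFun Disjoint S) := by
    intro σ τ hne
    rw [Function.onFun, Set.disjoint_left]
    rintro x ⟨hσ, _⟩ ⟨hτ, _⟩
    apply hne
    have hrange : Set.range (x ∘ σ) = Set.range (x ∘ τ) := by
      rw [Set.range_comp, Set.range_comp]
      simp [Set.range_eq_univ.2 σ.surjective, Set.range_eq_univ.2 τ.surjective]
    haveI : WellFoundedLT (Fin R) := inferInstance
    have heq : x ∘ ⇑σ = x ∘ ⇑τ := (StrictMono.range_inj hσ hτ).1 hrange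
    have hxinj : Function.Injective x := by
      intro a b hab
      have h1 : (x ∘ σ) (σ.symm a) = (x ∘ σ) (σ.symm b) := by
        simp only [Function.comp_apply, Equiv.apply_symm_apply]; exact hab
      have := hσ.injective h1
      simpa using congrArg σ this
    exact Equiv.ext fun i => hxinj (congrFun heq i)
  have hunion : volume (⋃ σ, S σ) = ∑' σ, volume (S σ) :=
    measure_iUnion hdisj hSmeas
  have hsub : (⋃ σ, S σ) ⊆ C := Set.iUnion_subset fun σ => Set.inter_subset_right
  have hCvol : volume C = ENNReal.ofReal r ^ R := by
    rw [hC, volume_pi_pi]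
    simp [Real.volume_Ioo]
  have hsum : (R.factorial : ℝ≥0∞) * volume (S 1) ≤ ENNReal.ofReal r ^ R := by
    have h1 : ∑' σ : Equiv.Perm (Fin R), volume (S 1) = (R.factorial : ℝ≥0∞) * volume (S 1) := by
      rw [tsum_fintype]
      simp [Finset.sum_const, Fintype.card_perm]
    calc (R.factorial : ℝ≥0∞) * volume (S 1) = ∑' σ : Equiv.Perm (Fin R), volume (S 1) := h1.symm
      _ = ∑' σ, volume (S σ) := by congr 1; ext σ; rw [hvol σ]
      _ = volume (⋃ σ, S σ) := hunion.symm
      _ ≤ volume C := measure_mono hsub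
      _ = ENNReal.ofReal r ^ R := hCvol
  have htarget : {x : Fin R → ℝ | StrictMono x ∧ ∀ i, x i ∈ Set.Ioo 0 r} = S 1 := by
    ext x
    simp [hS, hC, Set.mem_pi, Function.comp]
  rw [htarget]
  have hfac0 : (R.factorial : ℝ≥0∞) ≠ 0 := by
    simp [Nat.factorial_ne_zero]
  have hfact : (R.factorial : ℝ≥0∞) ≠ ∞ := ENNReal.natCast_ne_top _
  have hdiv : volume (S 1) ≤ ENNReal.ofReal r ^ R / (R.factorial : ℝ≥0∞) :=
    (ENNReal.le_div_iff_mul_le (Or.inl hfac0) (Or.inl hfact)).2 (by rw [mul_comm]; exact hsum)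
  refine hdiv.trans (le_of_eq ?_)
  rw [ENNReal.ofReal_div_of_pos (by exact_mod_cast R.factorial_pos)]
  congr 1
  · exact (ENNReal.ofReal_pow hr R).symm
  · simp




lemma exp_half_le : Real.exp (-(1:ℝ)/2) ≤ 61/100 := by
  have h2 : Real.exp 1 = Real.exp ((1:ℝ)/2) ^ 2 := by
    rw [← Real.exp_nat_mul]; norm_num
  have he : (2.7182818283 : ℝ) < Real.exp 1 := Real.exp_one_gt_d9
  have ha : (0:ℝ) < Real.exp ((1:ℝ)/2) := Real.exp_pos _
  have haux : (164/100 : ℝ) < Real.exp ((1:ℝ)/2) := by nlinarith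
  have hb : Real.exp (-(1:ℝ)/2) * Real.exp ((1:ℝ)/2) = 1 := by
    rw [← Real.exp_add]; norm_num
  nlinarith [Real.exp_pos (-(1:ℝ)/2)]

lemma exp_neg_one_le : Real.exp (-(1:ℝ)) ≤ 37/100 := by
  have he : (2.7182818283 : ℝ) < Real.exp 1 := Real.exp_one_gt_d9
  have hb : Real.exp (-(1:ℝ)) * Real.exp 1 = 1 := by
    rw [← Real.exp_add]; norm_num
  nlinarith [Real.exp_pos (-(1:ℝ))]

lemma pow_div_factorial_le_exp (r : ℝ) (hr : 0 ≤ r) (R : ℕ) :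
    r ^ R / R.factorial ≤ Real.exp r := by
  have h := Real.sum_le_exp_of_nonneg hr (R + 1)
  have h2 : r ^ R / R.factorial ≤ ∑ i ∈ Finset.range (R + 1), r ^ i / i.factorial := by
    refine Finset.single_le_sum (f := fun i => r ^ i / i.factorial) (fun i _ => by positivity)
      (Finset.self_mem_range_succ R)
  linarith

lemma key_energy (g Rr f : ℝ) (hg : 2 ≤ g) (hR : g + 1 ≤ Rr) (hf0 : 0 ≤ f) (hf1 : f ≤ 1) :
    (61/100) * ((g+1)*(2*g+1)/6 + (61/100)*(g+1) + (61/100)^2)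
    + (1 - 61/100)
    + (Rr - g - 1) * (((1+37/100)^3 - (37/100)^3)/3)
    + (37/100) * (1+37/100)^2
    + ((g+f)^3 - (37/100)^3)/3
    + (g^2-1)*(Rr-g)
    ≤ g^2 * (Rr + f) := by
  nlinarith [mul_nonneg (mul_nonneg (sub_nonneg.2 hg) (sub_nonneg.2 hg)) (sub_nonneg.2 hg),
    mul_nonneg (sub_nonneg.2 hg) (sub_nonneg.2 hf1), mul_nonneg hf0 (sub_nonneg.2 hf1),
    mul_nonneg (mul_nonneg hf0 hf0) (sub_nonneg.2 hf1),
    mul_nonneg (mul_nonneg (sub_nonneg.2 hg) (sub_nonneg.2 hg)) (sub_nonneg.2 hf1),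
    mul_nonneg (mul_nonneg (sub_nonneg.2 hg) hf0) (sub_nonneg.2 hf1),
    sub_nonneg.2 hR, mul_nonneg (sub_nonneg.2 hg) hf0]




lemma nmeas (R : ℕ) (t : ℝ) :
    Measurable (fun x : Fin R → ℝ => ((Finset.univ.filter fun i => x i ≤ t).card : ℝ)) := by
  classical
  have h : (fun x : Fin R → ℝ => ((Finset.univ.filter fun i => x i ≤ t).card : ℝ))
      = fun x => ∑ i : Fin R, if x i ≤ t then (1:ℝ) else 0 := by
    funext x
    rw [Finset.card_filter]
    push_cast
    rfl
  rw [h]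
  refine Finset.measurable_sum _ fun i _ => ?_
  exact Measurable.ite (measurableSet_le (measurable_pi_apply i) measurable_const)
    measurable_const measurable_const

lemma Kmeas (R γ : ℕ) (t : ℝ) :
    Measurable (fun x : Fin R → ℝ =>
      (γ:ℝ) + t - ((Finset.univ.filter fun i => x i ≤ t).card : ℝ)) :=
  measurable_const.sub (nmeas R t)

lemma nmono (R : ℕ) (x : Fin R → ℝ) :
    Monotone (fun t : ℝ => ((Finset.univ.filter fun i => x i ≤ t).card : ℝ)) := by
  classical
  intro t s hts
  have : (Finset.univ.filter fun i => x i ≤ t) ⊆ (Finset.univ.filter fun i => x i ≤ s) :=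
    Finset.monotone_filter_right _ fun i _ hi => le_trans hi hts
  simp only []
  exact_mod_cast Finset.card_le_card this

lemma card_filter_le_R (R : ℕ) (x : Fin R → ℝ) (t : ℝ) :
    ((Finset.univ.filter fun i => x i ≤ t).card : ℝ) ≤ R := by
  classical
  have := Finset.card_filter_le (Finset.univ : Finset (Fin R)) (fun i => x i ≤ t)
  simp only [Finset.card_univ, Fintype.card_fin] at this
  exact_mod_cast this

lemma Kint (R γ : ℕ) (r : ℝ) (x : Fin R → ℝ) {a b : ℝ} (h0 : 0 ≤ a) (hbr : b ≤ r)
    (hab : a ≤ b) :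
    IntervalIntegrable
      (fun t => ((γ:ℝ) + t - ((Finset.univ.filter fun i => x i ≤ t).card : ℝ))^2)
      volume a b := by
  classical
  rw [intervalIntegrable_iff]
  refine Measure.integrableOn_of_bounded (measure_Ioc_lt_top).ne ?_
    (M := ((γ:ℝ) + r + R)^2) ?_
  · exact ((((measurable_const.add measurable_id).sub ((nmono R x).measurable)).pow_const
      2)).aestronglyMeasurable
  · have huIoc : Set.uIoc a b = Set.Ioc a b := Set.uIoc_of_le hab
    rw [huIoc]
    refine (ae_restrict_mem measurableSet_Ioc).mono fun t ht => ?_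
    have ht0 : 0 ≤ t := le_trans h0 ht.1.le
    have htr : t ≤ r := le_trans ht.2 hbr
    have h1 : (0:ℝ) ≤ ((Finset.univ.filter fun i => x i ≤ t).card : ℝ) := by positivity
    have h2 := card_filter_le_R R x t
    have hRr : (0:ℝ) ≤ r := le_trans ht0 htr
    rw [Real.norm_eq_abs, abs_of_nonneg (by positivity)]
    have hc : (0:ℝ) ≤ (γ:ℝ) := by positivity
    refine sq_le_sq' (by nlinarith) (by nlinarith)



end JelliumAux

set_option maxHeartbeats 2000000 in
open JelliumAux in
/-- Lemma 6.1: for the 1D jellium of `R = ⌊r⌋` particles in `[0,r]` with an external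
charge `γ` affixed at `0` and `-(γ + {r})` affixed at `r`, the Gibbs probability that
`K(t) ≥ γ` for every `t ∈ [0,r]` is at most
`exp(-(β/2)(γ²-1)(R-γ)) · exp(2R + γ ln γ)`. -/
theorem oneD_min_imbalance_bound (β r : ℝ) (hβ : 0 < β) (hr : 0 < r)
    (γ : ℕ) (hγ : 0 < γ) (hγr : (γ : ℝ) < r) :
    let R : ℕ := ⌊r⌋₊
    let Δ : Set (Fin R → ℝ) := {x | StrictMono x ∧ ∀ i, x i ∈ Set.Ioo 0 r}
    let K : ℝ → (Fin R → ℝ) → ℝ := fun t x =>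
      (γ : ℝ) + t - (Nat.card {i : Fin R // x i ≤ t} : ℝ)
    let U : (Fin R → ℝ) → ℝ := fun x => (1 / 2) * ∫ t in (0:ℝ)..r, (K t x) ^ 2
    let Z : ℝ≥0∞ := ∫⁻ x in Δ, ENNReal.ofReal (Real.exp (-β * U x))
    let P : Measure (Fin R → ℝ) :=
      Z⁻¹ • ((volume.restrict Δ).withDensity fun x => ENNReal.ofReal (Real.exp (-β * U x)))
    P {x | ∀ t ∈ Set.Icc (0:ℝ) r, (γ : ℝ) ≤ K t x} ≤
      ENNReal.ofReal
        (Real.exp (-(β / 2) * ((γ : ℝ) ^ 2 - 1) * ((R : ℝ) - (γ : ℝ))) *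
          Real.exp (2 * (R : ℝ) + (γ : ℝ) * Real.log (γ : ℝ))) := by
  intro R Δ K U Z P
  classical
  have hγR : γ ≤ R := Nat.le_floor hγr.le
  have hRr : (R : ℝ) ≤ r := Nat.floor_le hr.le
  have hrR1 : r < (R : ℝ) + 1 := Nat.lt_floor_add_one r
  have hγRr : (γ : ℝ) ≤ (R : ℝ) := by exact_mod_cast hγR
  have hγ1R : (1:ℝ) ≤ (γ:ℝ) := by exact_mod_cast hγ
  set n : (Fin R → ℝ) → ℝ → ℕ := fun x t => (Finset.univ.filter fun i => x i ≤ t).card with hn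
  have hKn : ∀ (t : ℝ) (x : Fin R → ℝ), K t x = (γ:ℝ) + t - (n x t : ℝ) := by
    intro t x
    show (γ : ℝ) + t - (Nat.card {i : Fin R // x i ≤ t} : ℝ) = _
    have h : Nat.card {i : Fin R // x i ≤ t} = n x t := by
      rw [Nat.card_eq_fintype_card, hn]
      exact Fintype.card_subtype _
    rw [h]
  have hKmeasx : ∀ t : ℝ, Measurable fun x : Fin R → ℝ => K t x := by
    intro t
    have h : (fun x : Fin R → ℝ => K t x)
        = fun x => (γ:ℝ) + t - ((Finset.univ.filter fun i => x i ≤ t).card : ℝ) :=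
      funext fun x => hKn t x
    rw [h]
    exact Kmeas R γ t
  have hKintt : ∀ (x : Fin R → ℝ) {a b : ℝ}, 0 ≤ a → b ≤ r → a ≤ b →
      IntervalIntegrable (fun t => (K t x)^2) volume a b := by
    intro x a b h0 hbr hab
    have h : (fun t => (K t x)^2)
        = fun t => ((γ:ℝ) + t - ((Finset.univ.filter fun i => x i ≤ t).card : ℝ))^2 :=
      funext fun t => by rw [hKn]
    rw [h]
    exact Kint R γ r x h0 hbr hab
  set WD : Measure (Fin R → ℝ) :=
    ((volume.restrict Δ).withDensity fun x => ENNReal.ofReal (Real.exp (-β * U x))) with hWD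
  set Sev : Set (Fin R → ℝ) := {x | ∀ t ∈ Set.Icc (0:ℝ) r, (γ : ℝ) ≤ K t x} with hSev
  have hPapp : ∀ s : Set (Fin R → ℝ), P s = Z⁻¹ * WD s := by
    intro s
    show (Z⁻¹ • WD) s = Z⁻¹ * WD s
    rw [Measure.smul_apply, smul_eq_mul]
  -- the measurable rational superset
  set Bev : Set (Fin R → ℝ) :=
    ⋂ (q : ℚ), {x | (q:ℝ) ∈ Set.Icc (0:ℝ) r → (γ:ℝ) ≤ K (q:ℝ) x} with hBev
  have hBmeas : MeasurableSet Bev := by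
    refine MeasurableSet.iInter fun q => ?_
    by_cases hq : (q:ℝ) ∈ Set.Icc (0:ℝ) r
    · have h : {x : Fin R → ℝ | (q:ℝ) ∈ Set.Icc (0:ℝ) r → (γ:ℝ) ≤ K (q:ℝ) x}
          = {x | (γ:ℝ) ≤ K (q:ℝ) x} := by ext x; simp [hq]
      rw [h]
      exact measurableSet_le measurable_const (hKmeasx _)
    · have h : {x : Fin R → ℝ | (q:ℝ) ∈ Set.Icc (0:ℝ) r → (γ:ℝ) ≤ K (q:ℝ) x}
          = Set.univ := by ext x; simp [hq]
      rw [h]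
      exact MeasurableSet.univ
  have hSB : Sev ⊆ Bev := by
    intro x hx
    exact Set.mem_iInter.2 fun q hq => hx _ hq
  have hBpt : ∀ x ∈ Bev, ∀ t : ℝ, 0 ≤ t → t < r → (γ:ℝ) ≤ K t x := by
    intro x hx t ht0 htr
    refine le_of_forall_pos_le_add fun ε hε => ?_
    obtain ⟨q, hq1, hq2⟩ := exists_rat_btwn
      (show t < min r (t + ε) by rw [lt_min_iff]; exact ⟨htr, by linarith⟩)
    rw [lt_min_iff] at hq2
    have hqIcc : (q:ℝ) ∈ Set.Icc (0:ℝ) r := ⟨le_trans ht0 hq1.le, hq2.1.le⟩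
    have hqK : (γ:ℝ) ≤ K (q:ℝ) x := (Set.mem_iInter.1 hx q) hqIcc
    have hmono : (n x t : ℝ) ≤ (n x (q:ℝ) : ℝ) := by
      have := Finset.card_le_card
        (Finset.monotone_filter_right (Finset.univ : Finset (Fin R))
          (fun i _ (hi : x i ≤ t) => le_trans hi hq1.le))
      exact_mod_cast this
    rw [hKn] at hqK ⊢
    have h2 := hq2.2
    linarith
  have hUlow : ∀ x ∈ Bev, (γ:ℝ)^2 * r / 2 ≤ U x := by
    intro x hx
    have hint := hKintt x (le_refl (0:ℝ)) (le_refl r) hr.le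
    have hae : (fun _ : ℝ => (γ:ℝ)^2) ≤ᵐ[volume.restrict (Set.Icc (0:ℝ) r)]
        fun t => (K t x)^2 := by
      have hrne : ∀ᵐ t : ℝ ∂volume, t ≠ r := by
        rw [ae_iff]
        have h : {t : ℝ | ¬ t ≠ r} = {r} := by ext t; simp
        rw [h]
        exact Real.volume_singleton
      have hmem : ∀ᵐ t ∂(volume.restrict (Set.Icc (0:ℝ) r)), t ∈ Set.Icc (0:ℝ) r :=
        ae_restrict_mem measurableSet_Icc
      filter_upwards [ae_restrict_of_ae hrne, hmem] with t htne htm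
      have hKt : (γ:ℝ) ≤ K t x := hBpt x hx t htm.1 (lt_of_le_of_ne htm.2 htne)
      nlinarith [hγ1R]
    have hmono := intervalIntegral.integral_mono_ae_restrict hr.le
      (intervalIntegrable_const) hint hae
    rw [intervalIntegral.integral_const] at hmono
    show (γ:ℝ)^2 * r / 2 ≤ (1/2 : ℝ) * ∫ t in (0:ℝ)..r, (K t x)^2
    rw [smul_eq_mul, sub_zero] at hmono
    linarith
  -- upper bound P Sev ≤ Z⁻¹ * (C1 * volume (Bev ∩ Δ)) with C1 the min-energy weight
  set C1 : ℝ≥0∞ := ENNReal.ofReal (Real.exp (-β * ((γ:ℝ)^2 * r / 2))) with hC1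
  have hΔmeas : MeasurableSet Δ := by
    have h1 : MeasurableSet {x : Fin R → ℝ | StrictMono x} := by
      have hset : {x : Fin R → ℝ | StrictMono x}
          = ⋂ (p : Fin R × Fin R) (_ : p.1 < p.2), {x | x p.1 < x p.2} := by
        ext x
        simp only [Set.mem_setOf_eq, Set.mem_iInter, StrictMono]
        exact ⟨fun h p hp => h hp, fun h a b hab => h ⟨a, b⟩ hab⟩
      rw [hset]
      refine MeasurableSet.iInter fun p => MeasurableSet.iInter fun _ => ?_
      exact measurableSet_lt (measurable_pi_apply _) (measurable_pi_apply _)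
    have h2 : MeasurableSet {x : Fin R → ℝ | ∀ i, x i ∈ Set.Ioo (0:ℝ) r} := by
      have : {x : Fin R → ℝ | ∀ i, x i ∈ Set.Ioo (0:ℝ) r}
          = Set.univ.pi fun _ => Set.Ioo (0:ℝ) r := by
        ext x; simp [Set.mem_pi]
      rw [this]
      exact MeasurableSet.univ_pi fun _ => measurableSet_Ioo
    exact h1.inter h2
  have hWDB : WD Bev ≤ C1 * ENNReal.ofReal (r ^ R / R.factorial) := by
    rw [hWD, withDensity_apply _ hBmeas, Measure.restrict_restrict hBmeas]
    have hstep : ∫⁻ x in Bev ∩ Δ, ENNReal.ofReal (Real.exp (-β * U x)) ∂volume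
        ≤ ∫⁻ _ in Bev ∩ Δ, C1 ∂volume := by
      refine lintegral_mono_ae ?_
      refine (ae_restrict_mem (hBmeas.inter hΔmeas)).mono fun x hx => ?_
      have hU := hUlow x hx.1
      rw [hC1]
      apply ENNReal.ofReal_le_ofReal
      apply Real.exp_le_exp.2
      nlinarith
    refine hstep.trans ?_
    rw [setLIntegral_const]
    refine mul_le_mul_right ?_ C1
    refine (measure_mono Set.inter_subset_right).trans ?_
    exact volume_simplex_le R r hr.le
  -- trivial case
  by_cases htriv : γ = 1 ∨ R = γ
  · have hP1 : P Sev ≤ 1 := by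
      rw [hPapp]
      have h1 : WD Sev ≤ WD Set.univ := measure_mono (Set.subset_univ _)
      have h2 : WD Set.univ = Z := by
        rw [hWD, withDensity_apply _ MeasurableSet.univ, Measure.restrict_univ]
      calc Z⁻¹ * WD Sev ≤ Z⁻¹ * WD Set.univ := mul_le_mul_right h1 _
        _ = Z⁻¹ * Z := by rw [h2]
        _ ≤ 1 := ENNReal.inv_mul_le_one Z
    refine hP1.trans ?_
    have h0 : -(β / 2) * ((γ : ℝ) ^ 2 - 1) * ((R : ℝ) - (γ : ℝ)) = 0 := by
      rcases htriv with h | h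
      · subst h; norm_num
      · rw [h]; ring
    rw [h0, Real.exp_zero, one_mul]
    refine ENNReal.one_le_ofReal.2 ?_
    have : (0:ℝ) ≤ 2 * (R : ℝ) + (γ : ℝ) * Real.log (γ : ℝ) := by
      have hlog : 0 ≤ Real.log (γ:ℝ) := Real.log_nonneg hγ1R
      positivity
    have := Real.exp_le_exp.2 this
    rwa [Real.exp_zero] at this
  -- main case
  push_neg at htriv
  obtain ⟨hγne1, hRneγ⟩ := htriv
  have hγ2 : 2 ≤ γ := by omega
  have hR1γ : γ + 1 ≤ R := by omega
  have hγ2R : (2:ℝ) ≤ (γ:ℝ) := by exact_mod_cast hγ2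
  have hR1γR : (γ:ℝ) + 1 ≤ (R:ℝ) := by exact_mod_cast hR1γ
  have hγpos : (0:ℝ) < (γ:ℝ) := by linarith
  set η : ℝ := 61/100 with hηdef
  set δ : ℝ := 37/100 with hδdef
  have hη0 : (0:ℝ) < η := by norm_num [hηdef]
  have hη1 : η ≤ 1 := by norm_num [hηdef]
  have hδ0 : (0:ℝ) < δ := by norm_num [hδdef]
  have hδ1 : δ ≤ 1 := by norm_num [hδdef]
  set Aa : Fin R → ℝ :=
    fun i => if (i:ℕ) < γ then η * (i:ℕ) / γ else ((i:ℕ):ℝ) - γ + 1 with hAa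
  set Bb : Fin R → ℝ :=
    fun i => if (i:ℕ) < γ then η * ((i:ℕ)+1) / γ else ((i:ℕ):ℝ) - γ + 1 + δ with hBb
  set Box : Set (Fin R → ℝ) := Set.univ.pi fun i => Set.Ioo (Aa i) (Bb i) with hBox
  have ht3ge1 : (1:ℝ) ≤ (R:ℝ) - γ := by linarith
  have ht4r : (R:ℝ) - γ + δ ≤ r := by linarith
  -- interval bounds for Aa Bb
  have hAa_lt_Bb : ∀ i : Fin R, Aa i < Bb i := by
    intro i
    rw [hAa, hBb]
    by_cases h : (i:ℕ) < γ
    · simp only [h, if_true]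
      have h2 : η * (i:ℕ) < η * ((i:ℕ)+1) := by nlinarith
      exact (div_lt_div_iff_of_pos_right hγpos).2 h2
    · simp only [h, if_false]
      linarith
  have hBb_le : ∀ i j : Fin R, i < j → Bb i ≤ Aa j := by
    intro i j hij
    have hijn : (i:ℕ) < (j:ℕ) := hij
    rw [hAa, hBb]
    by_cases hi : (i:ℕ) < γ
    · by_cases hj : (j:ℕ) < γ
      · simp only [hi, hj, if_true]
        have h2 : η * ((i:ℕ)+1) ≤ η * (j:ℕ) := by
          have : ((i:ℕ):ℝ) + 1 ≤ (j:ℕ) := by exact_mod_cast hijn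
          nlinarith
        exact (div_le_div_iff_of_pos_right hγpos).2 h2
      · simp only [hi, hj, if_true, if_false]
        have h1 : η * ((i:ℕ)+1) / γ ≤ η := by
          rw [div_le_iff₀ hγpos]
          have : ((i:ℕ):ℝ) + 1 ≤ (γ:ℝ) := by exact_mod_cast hi
          nlinarith
        push_neg at hj
        have : (γ:ℝ) ≤ ((j:ℕ):ℝ) := by exact_mod_cast hj
        linarith
    · by_cases hj : (j:ℕ) < γ
      · exact absurd (hijn.trans hj) hi
      · simp only [hi, hj, if_false]
        have : ((i:ℕ):ℝ) + 1 ≤ ((j:ℕ):ℝ) := by exact_mod_cast hijn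
        linarith
  have hAa_nonneg : ∀ i : Fin R, 0 ≤ Aa i := by
    intro i
    rw [hAa]
    by_cases h : (i:ℕ) < γ
    · simp only [h, if_true]; positivity
    · simp only [h, if_false]
      push_neg at h
      have : (γ:ℝ) ≤ ((i:ℕ):ℝ) := by exact_mod_cast h
      linarith
  have hBb_le_r : ∀ i : Fin R, Bb i ≤ r := by
    intro i
    rw [hBb]
    by_cases h : (i:ℕ) < γ
    · simp only [h, if_true]
      have h1 : η * ((i:ℕ)+1) / γ ≤ η := by
        rw [div_le_iff₀ hγpos]
        have : ((i:ℕ):ℝ) + 1 ≤ (γ:ℝ) := by exact_mod_cast h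
        nlinarith
      linarith
    · simp only [h, if_false]
      have h1 : ((i:ℕ):ℝ) ≤ (R:ℝ) - 1 := by
        have hlt : (i:ℕ) < R := i.isLt
        have h2 : ((i:ℕ):ℝ) + 1 ≤ (R:ℝ) := by exact_mod_cast hlt
        linarith
      linarith
  have hBoxΔ : Box ⊆ Δ := by
    intro x hx
    have hxi : ∀ i : Fin R, Aa i < x i ∧ x i < Bb i := by
      intro i
      have := hx i (Set.mem_univ i)
      exact ⟨this.1, this.2⟩
    constructor
    · intro i j hij
      calc x i < Bb i := (hxi i).2
        _ ≤ Aa j := hBb_le i j hij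
        _ < x j := (hxi j).1
    · intro i
      exact ⟨lt_of_le_of_lt (hAa_nonneg i) (hxi i).1, lt_of_lt_of_le (hxi i).2 (hBb_le_r i)⟩
  have hBoxmeas : MeasurableSet Box := MeasurableSet.univ_pi fun i => measurableSet_Ioo
    -- volume of the box
  have hBoxvol : volume Box = ENNReal.ofReal ((η/γ)^γ * δ^(R-γ)) := by
    rw [hBox, volume_pi_pi]
    have hlen : ∀ i : Fin R, volume (Set.Ioo (Aa i) (Bb i))
        = if (i:ℕ) < γ then ENNReal.ofReal (η/γ) else ENNReal.ofReal δ := by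
      intro i
      rw [Real.volume_Ioo, hAa, hBb]
      by_cases h : (i:ℕ) < γ
      · simp only [h, if_true]
        congr 1
        field_simp
        ring
      · simp only [h, if_false]
        congr 1
        ring
    rw [Finset.prod_congr rfl (fun i _ => hlen i), Finset.prod_ite, Finset.prod_const,
      Finset.prod_const]
    have hc1 : (Finset.univ.filter fun i : Fin R => (i:ℕ) < γ).card = γ :=
      le_antisymm (card_le_of_lt _ _ (fun i hi => (Finset.mem_filter.1 hi).2))
        (le_card_of_lt _ _ hγR (fun i hi => Finset.mem_filter.2 ⟨Finset.mem_univ _, hi⟩))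
    have hc2 : (Finset.univ.filter fun i : Fin R => ¬((i:ℕ) < γ)).card = R - γ := by
      have hh := Finset.card_filter_add_card_filter_not
        (s := (Finset.univ : Finset (Fin R))) (p := fun i : Fin R => (i:ℕ) < γ)
      rw [Finset.card_univ, Fintype.card_fin] at hh
      omega
    rw [hc1, hc2, ← ENNReal.ofReal_pow (by positivity), ← ENNReal.ofReal_pow hδ0.le,
      ← ENNReal.ofReal_mul (by positivity)]
  -- branch value helpers
  have hBbHead : ∀ i : Fin R, (i:ℕ) < γ → Bb i = η * ((i:ℕ)+1) / γ := by
    intro i h; rw [hBb]; simp [h]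
  have hBbMid : ∀ i : Fin R, ¬((i:ℕ) < γ) → Bb i = ((i:ℕ):ℝ) - γ + 1 + δ := by
    intro i h; rw [hBb]; simp [h]
  have hAaHead : ∀ i : Fin R, (i:ℕ) < γ → Aa i = η * (i:ℕ) / γ := by
    intro i h; rw [hAa]; simp [h]
  have hAaMid : ∀ i : Fin R, ¬((i:ℕ) < γ) → Aa i = ((i:ℕ):ℝ) - γ + 1 := by
    intro i h; rw [hAa]; simp [h]
  have hBbHead_le_η : ∀ i : Fin R, (i:ℕ) < γ → Bb i ≤ η := by
    intro i h
    rw [hBbHead i h]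
    rw [div_le_iff₀ hγpos]
    have h2 : ((i:ℕ):ℝ) + 1 ≤ (γ:ℝ) := by exact_mod_cast h
    nlinarith
  -- real bookkeeping
  set f1 : ℝ := r - R with hf1def
  have hf10 : 0 ≤ f1 := by rw [hf1def]; linarith
  have hf11 : f1 ≤ 1 := by rw [hf1def]; linarith
  set Hd : ℝ := η*(((γ:ℝ)+1)*(2*(γ:ℝ)+1)/6 + η*((γ:ℝ)+1) + η^2) with hHddef
  set c3v : ℝ := ((1+δ)^3 - δ^3)/3 with hc3def
  set pv : ℝ := δ*(1+δ)^2 with hpvdef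
  set Rmpv : ℝ := (((γ:ℝ)+f1)^3 - δ^3)/3 with hRmpdef
  set Mv : ℝ := ((R - γ - 1 : ℕ) : ℝ) with hMvdef
  have hMv : Mv = (R:ℝ) - γ - 1 := by
    have h1 : (R - γ - 1) + (γ + 1) = R := by omega
    have h2 : ((R - γ - 1 : ℕ):ℝ) + ((γ:ℝ) + 1) = (R:ℝ) := by exact_mod_cast h1
    rw [hMvdef]
    linarith
  set Wv : ℝ := Hd + (1-η) + Mv*c3v + pv + Rmpv with hWvdef
  -- energy upper bound on the box
  have hUhigh : ∀ x ∈ Box, U x ≤ Wv/2 := by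
    intro x hx
    have hxi : ∀ i : Fin R, Aa i < x i ∧ x i < Bb i := by
      intro i
      have := hx i (Set.mem_univ i)
      exact ⟨this.1, this.2⟩
    have nLB : ∀ (m : ℕ) (t : ℝ), m ≤ R → (∀ i : Fin R, (i:ℕ) < m → Bb i ≤ t) →
        (m:ℝ) ≤ (n x t : ℝ) := by
      intro m t hm h
      have h2 := le_card_of_lt (Finset.univ.filter fun i => x i ≤ t) m hm
        (fun i hi => Finset.mem_filter.2 ⟨Finset.mem_univ _, ((hxi i).2.trans_le (h i hi)).le⟩)
      exact_mod_cast h2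
    have nUB : ∀ (m : ℕ) (t : ℝ), (∀ i : Fin R, m ≤ (i:ℕ) → t ≤ Aa i) →
        (n x t : ℝ) ≤ (m:ℝ) := by
      intro m t h
      refine Nat.cast_le.2 (card_le_of_lt (Finset.univ.filter fun i => x i ≤ t) m ?_)
      intro i hi
      by_contra hge
      push_neg at hge
      have h1 := h i hge
      have h2 := (Finset.mem_filter.1 hi).2
      have h3 := (hxi i).1
      linarith
    -- head cells
    set aseq : ℕ → ℝ := fun j => η * j / γ with haseq
    have haseq0 : aseq 0 = 0 := by simp [haseq]
    have haseqγ : aseq γ = η := by rw [haseq]; field_simp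
    have haseqmono : ∀ j k : ℕ, j ≤ k → aseq j ≤ aseq k := by
      intro j k hjk
      rw [haseq]
      have hjk' : ((j:ℕ):ℝ) ≤ (k:ℕ) := Nat.cast_le.2 hjk
      refine (div_le_div_iff_of_pos_right hγpos).2 (by nlinarith)
    have haseqnn : ∀ j : ℕ, 0 ≤ aseq j := by
      intro j; rw [haseq]; positivity
    have hheadint : ∀ k, k < γ →
        IntervalIntegrable (fun t => (K t x)^2) volume (aseq k) (aseq (k+1)) := by
      intro k hk
      refine hKintt x (haseqnn k) ?_ (haseqmono k (k+1) (Nat.le_succ k))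
      calc aseq (k+1) ≤ aseq γ := haseqmono _ _ hk
        _ = η := haseqγ
        _ ≤ r := by linarith
    have hhead : ∫ t in (0:ℝ)..η, (K t x)^2 ≤ Hd := by
      rw [← haseq0, ← haseqγ, ← intervalIntegral.sum_integral_adjacent_intervals hheadint]
      have hcell : ∀ k ∈ Finset.range γ, (∫ t in aseq k..aseq (k+1), (K t x)^2)
          ≤ (η/γ) * (((γ:ℝ) - k) + η)^2 := by
        intro k hk
        have hkγ := Finset.mem_range.1 hk
        have hkR : ((k:ℕ):ℝ) + 1 ≤ (γ:ℝ) := by exact_mod_cast hkγ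
        have hptw : ∀ t ∈ Set.Icc (aseq k) (aseq (k+1)), (K t x)^2 ≤ (((γ:ℝ) - k) + η)^2 := by
          intro t ht
          have ht0 : 0 ≤ t := le_trans (haseqnn k) ht.1
          have htη1 : t ≤ aseq (k+1) := ht.2
          have htη : t ≤ η := le_trans ht.2 (by rw [← haseqγ]; exact haseqmono _ _ hkγ)
          have hcLB : ((k:ℕ):ℝ) ≤ (n x t : ℝ) := by
            refine nLB k t (le_trans hkγ.le hγR) fun i hi => ?_
            have hiγ : (i:ℕ) < γ := lt_trans hi hkγ
            rw [hBbHead i hiγ]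
            calc η*((i:ℕ)+1)/γ ≤ aseq k := by
                  rw [haseq]
                  refine (div_le_div_iff_of_pos_right hγpos).2 ?_
                  have h3 : ((i:ℕ):ℝ) + 1 ≤ ((k:ℕ):ℝ) := by exact_mod_cast hi
                  nlinarith [mul_le_mul_of_nonneg_left h3 hη0.le]
              _ ≤ t := ht.1
          have hcUB : (n x t : ℝ) ≤ ((k:ℕ):ℝ) + 1 := by
            have hb : ∀ i : Fin R, k+1 ≤ (i:ℕ) → t ≤ Aa i := by
              intro i hi
              by_cases hiγ : (i:ℕ) < γ
              · rw [hAaHead i hiγ]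
                refine le_trans htη1 ?_
                rw [haseq]
                push_cast
                refine (div_le_div_iff_of_pos_right hγpos).2 ?_
                have h3 : ((k:ℕ):ℝ) + 1 ≤ ((i:ℕ):ℝ) := by exact_mod_cast hi
                nlinarith [mul_le_mul_of_nonneg_left h3 hη0.le]
              · rw [hAaMid i hiγ]
                push_neg at hiγ
                have h3 : (γ:ℝ) ≤ ((i:ℕ):ℝ) := by exact_mod_cast hiγ
                linarith
            have h := nUB (k+1) t hb
            push_cast at h
            linarith
          have hKub : K t x ≤ ((γ:ℝ) - k) + η := by
            rw [hKn]; linarith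
          have hK0 : 0 ≤ K t x := by
            rw [hKn]; linarith
          exact pow_le_pow_left₀ hK0 hKub 2
        have hmono := intervalIntegral.integral_mono_on (haseqmono k (k+1) (Nat.le_succ k))
          (hheadint k hkγ) (intervalIntegrable_const) hptw
        rw [intervalIntegral.integral_const, smul_eq_mul] at hmono
        have hlen2 : aseq (k+1) - aseq k = η/γ := by
          rw [haseq]
          push_cast
          field_simp
          ring
        rw [hlen2] at hmono
        exact hmono
      refine (Finset.sum_le_sum hcell).trans ?_
      rw [← Finset.mul_sum]
      have hrefl : ∑ k ∈ Finset.range γ, (((γ:ℝ) - k) + η)^2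
          = ∑ k ∈ Finset.range γ, (((k:ℝ)+1)+η)^2 := by
        rw [← Finset.sum_range_reflect (fun j => (((j:ℝ)+1)+η)^2) γ]
        refine Finset.sum_congr rfl fun j hj => ?_
        have hjγ := Finset.mem_range.1 hj
        have hcast : ((γ - 1 - j : ℕ):ℝ) = (γ:ℝ) - 1 - j := by
          have h1 : (γ - 1 - j : ℕ) = γ - (j+1) := by omega
          rw [h1, Nat.cast_sub (by omega)]
          push_cast
          ring
        rw [hcast]
        ring
      rw [hrefl, sumsq]
      rw [hHddef]
      apply le_of_eq
      field_simp
    -- gap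
    have hgap : ∫ t in η..(1:ℝ), (K t x)^2 ≤ 1 - η := by
      have hptw : ∀ t ∈ Set.Icc η (1:ℝ), (K t x)^2 ≤ 1 := by
        intro t ht
        have hcLB : ((γ:ℕ):ℝ) ≤ (n x t : ℝ) := by
          refine nLB γ t hγR fun i hi => ?_
          exact le_trans (hBbHead_le_η i hi) ht.1
        have hcUB : (n x t : ℝ) ≤ ((γ:ℕ):ℝ) := by
          refine nUB γ t fun i hi => ?_
          have hiγ : ¬((i:ℕ) < γ) := by omega
          rw [hAaMid i hiγ]
          have h3 : (γ:ℝ) ≤ ((i:ℕ):ℝ) := by exact_mod_cast hi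
          linarith [ht.2]
        have hK0 : 0 ≤ K t x := by rw [hKn]; linarith [ht.1, hη0]
        have hK1 : K t x ≤ 1 := by rw [hKn]; linarith [ht.2]
        calc (K t x)^2 ≤ 1^2 := pow_le_pow_left₀ hK0 hK1 2
          _ = 1 := one_pow 2
      have hmono := intervalIntegral.integral_mono_on hη1
        (hKintt x hη0.le (by linarith) hη1) intervalIntegrable_const hptw
      rw [intervalIntegral.integral_const, smul_eq_mul, mul_one] at hmono
      exact hmono
    -- bulk
    set M : ℕ := R - γ - 1 with hMdef
    set bseq : ℕ → ℝ := fun k => 1 + (k:ℝ) with hbseq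
    have hMvM : Mv = (M:ℝ) := rfl
    have hMcast : (M:ℝ) = (R:ℝ) - γ - 1 := by rw [← hMvM]; exact hMv
    have hbseqM : bseq M = (R:ℝ) - γ := by
      have hb : bseq M = 1 + (M:ℝ) := rfl
      rw [hb, hMcast]
      ring
    have hbulkint : ∀ k, k < M →
        IntervalIntegrable (fun t => (K t x)^2) volume (bseq k) (bseq (k+1)) := by
      intro k hk
      have hkR2 : ((k:ℕ):ℝ) + 2 ≤ (R:ℝ) - γ := by
        have h2 : k + γ + 3 ≤ R + 1 := by omega
        have h3 := (Nat.cast_le (α := ℝ)).2 h2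
        push_cast at h3
        linarith
      rw [hbseq]
      push_cast
      refine hKintt x (by positivity) (by linarith) (by linarith)
    have hbulkk : ∀ k, k < M → (∫ t in bseq k..bseq (k+1), (K t x)^2) ≤ c3v := by
      intro k hk
      have hkR2 : ((k:ℕ):ℝ) + 2 ≤ (R:ℝ) - γ := by
        have h2 : k + γ + 3 ≤ R + 1 := by omega
        have h3 := (Nat.cast_le (α := ℝ)).2 h2
        push_cast at h3
        linarith
      have hγkR : γ + k + 1 ≤ R := by omega
      have hintA : IntervalIntegrable (fun t => (K t x)^2) volume (1 + (k:ℝ)) (1 + k + δ) :=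
        hKintt x (by positivity) (by linarith) (by linarith)
      have hintB : IntervalIntegrable (fun t => (K t x)^2) volume (1 + k + δ) (2 + (k:ℝ)) :=
        hKintt x (by positivity) (by linarith) (by linarith)
      have hptwA : ∀ t ∈ Set.Icc (1 + (k:ℝ)) (1 + k + δ), (K t x)^2 ≤ (t - k)^2 := by
        intro t ht
        have hcLB : ((γ + k : ℕ):ℝ) ≤ (n x t : ℝ) := by
          refine nLB (γ + k) t (by omega) fun i hi => ?_
          by_cases hiγ : (i:ℕ) < γ
          · exact le_trans (hBbHead_le_η i hiγ) (by linarith [ht.1])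
          · rw [hBbMid i hiγ]
            have h2 : ((i:ℕ):ℝ) + 1 ≤ (γ:ℝ) + k := by exact_mod_cast hi
            linarith [ht.1]
        have hcUB : (n x t : ℝ) ≤ (γ:ℝ) + k + 1 := by
          have hb : ∀ i : Fin R, γ + k + 1 ≤ (i:ℕ) → t ≤ Aa i := by
            intro i hi
            have hiγ : ¬((i:ℕ) < γ) := by omega
            rw [hAaMid i hiγ]
            have h3 : (γ:ℝ) + k + 1 ≤ ((i:ℕ):ℝ) := by exact_mod_cast hi
            linarith [ht.2]
          have h := nUB (γ+k+1) t hb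
          push_cast at h
          linarith
        have hcastγk : ((γ + k : ℕ):ℝ) = (γ:ℝ) + k := by push_cast; ring
        rw [hcastγk] at hcLB
        have hK0 : 0 ≤ K t x := by rw [hKn]; linarith [ht.1]
        have hKub : K t x ≤ t - k := by rw [hKn]; linarith
        exact pow_le_pow_left₀ hK0 hKub 2
      have hptwB : ∀ t ∈ Set.Icc (1 + k + δ) (2 + (k:ℝ)), (K t x)^2 ≤ (t - ((k:ℝ)+1))^2 := by
        intro t ht
        have hcLB : ((γ + k + 1 : ℕ):ℝ) ≤ (n x t : ℝ) := by
          refine nLB (γ + k + 1) t (by omega) fun i hi => ?_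
          by_cases hiγ : (i:ℕ) < γ
          · exact le_trans (hBbHead_le_η i hiγ) (by linarith [ht.1])
          · rw [hBbMid i hiγ]
            have h2 : ((i:ℕ):ℝ) + 1 ≤ (γ:ℝ) + k + 1 := by exact_mod_cast hi
            linarith [ht.1]
        have hcUB : (n x t : ℝ) ≤ (γ:ℝ) + k + 1 := by
          have hb : ∀ i : Fin R, γ + k + 1 ≤ (i:ℕ) → t ≤ Aa i := by
            intro i hi
            have hiγ : ¬((i:ℕ) < γ) := by omega
            rw [hAaMid i hiγ]
            have h3 : (γ:ℝ) + k + 1 ≤ ((i:ℕ):ℝ) := by exact_mod_cast hi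
            linarith [ht.2]
          have h := nUB (γ+k+1) t hb
          push_cast at h
          linarith
        have hcastγk : ((γ + k + 1 : ℕ):ℝ) = (γ:ℝ) + k + 1 := by push_cast; ring
        rw [hcastγk] at hcLB
        have hK0 : 0 ≤ K t x := by rw [hKn]; linarith [ht.1, hδ0]
        have hKub : K t x ≤ t - ((k:ℝ)+1) := by rw [hKn]; linarith
        exact pow_le_pow_left₀ hK0 hKub 2
      have hItA := intervalIntegral.integral_mono_on (by linarith) hintA
        (isq_intable _ _ _) hptwA
      rw [isq] at hItA
      have hItB := intervalIntegral.integral_mono_on (by linarith) hintB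
        (isq_intable _ _ _) hptwB
      rw [isq] at hItB
      have hsplit := intervalIntegral.integral_add_adjacent_intervals hintA hintB
      have hb1 : bseq k = 1 + (k:ℝ) := by rw [hbseq]
      have hb2 : bseq (k+1) = 2 + (k:ℝ) := by rw [hbseq]; push_cast; ring
      rw [hb1, hb2, ← hsplit, hc3def]
      have hvA : ((1 + (k:ℝ) + δ - k)^3 - (1 + (k:ℝ) - k)^3)/3 = ((1+δ)^3 - 1)/3 := by ring
      have hvB : ((2 + (k:ℝ) - ((k:ℝ)+1))^3 - (1 + (k:ℝ) + δ - ((k:ℝ)+1))^3)/3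
          = (1 - δ^3)/3 := by ring
      rw [hvA] at hItA
      rw [hvB] at hItB
      linarith
    have hbulk : ∫ t in (1:ℝ)..((R:ℝ) - γ), (K t x)^2 ≤ Mv * c3v := by
      have hsum := intervalIntegral.sum_integral_adjacent_intervals hbulkint
      have hb0 : bseq 0 = 1 := by rw [hbseq]; norm_num
      rw [hb0, hbseqM] at hsum
      rw [← hsum]
      refine (Finset.sum_le_sum fun k hk => hbulkk k (Finset.mem_range.1 hk)).trans ?_
      rw [Finset.sum_const, Finset.card_range, nsmul_eq_mul, hMvM]
    -- plateau
    have hplat : ∫ t in ((R:ℝ) - γ)..((R:ℝ) - γ + δ), (K t x)^2 ≤ pv := by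
      have hptw : ∀ t ∈ Set.Icc ((R:ℝ) - γ) ((R:ℝ) - γ + δ), (K t x)^2 ≤ (1+δ)^2 := by
        intro t ht
        have hcLB : ((R - 1 : ℕ):ℝ) ≤ (n x t : ℝ) := by
          refine nLB (R-1) t (by omega) fun i hi => ?_
          by_cases hiγ : (i:ℕ) < γ
          · exact le_trans (hBbHead_le_η i hiγ) (by linarith [ht.1])
          · rw [hBbMid i hiγ]
            have h2 : (i:ℕ) + 2 ≤ R := by omega
            have h3 : ((i:ℕ):ℝ) + 2 ≤ (R:ℝ) := by exact_mod_cast h2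
            linarith [ht.1]
        have hcUB : (n x t : ℝ) ≤ (R:ℝ) := card_filter_le_R R x t
        have hcast : ((R - 1:ℕ):ℝ) = (R:ℝ) - 1 := by
          rw [Nat.cast_sub (by omega)]
          norm_num
        rw [hcast] at hcLB
        have hK0 : 0 ≤ K t x := by rw [hKn]; linarith [ht.1]
        have hKub : K t x ≤ 1 + δ := by rw [hKn]; linarith [ht.2]
        exact pow_le_pow_left₀ hK0 hKub 2
      have hmono := intervalIntegral.integral_mono_on (by linarith)
        (hKintt x (by linarith) (by linarith) (by linarith)) intervalIntegrable_const hptw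
      rw [intervalIntegral.integral_const, smul_eq_mul] at hmono
      rw [hpvdef]
      calc ∫ t in ((R:ℝ) - γ)..((R:ℝ) - γ + δ), (K t x)^2
          ≤ ((R:ℝ) - γ + δ - ((R:ℝ) - γ)) * (1+δ)^2 := hmono
        _ = δ*(1+δ)^2 := by ring
    -- ramp
    have hramp : ∫ t in ((R:ℝ) - γ + δ)..r, (K t x)^2 ≤ Rmpv := by
      have hptw : ∀ t ∈ Set.Icc ((R:ℝ)-γ+δ) r, (K t x)^2 ≤ (t - ((R:ℝ)-γ))^2 := by
        intro t ht
        have hcLB : ((R:ℕ):ℝ) ≤ (n x t : ℝ) := by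
          refine nLB R t (le_refl R) fun i hi => ?_
          by_cases hiγ : (i:ℕ) < γ
          · exact le_trans (hBbHead_le_η i hiγ) (by linarith [ht.1])
          · rw [hBbMid i hiγ]
            have h2 : (i:ℕ) + 1 ≤ R := i.isLt
            have h3 : ((i:ℕ):ℝ) + 1 ≤ (R:ℝ) := by exact_mod_cast h2
            linarith [ht.1]
        have hcUB : (n x t : ℝ) ≤ (R:ℝ) := card_filter_le_R R x t
        have hK0 : 0 ≤ K t x := by rw [hKn]; linarith [ht.1, hδ0]
        have hKub : K t x ≤ t - ((R:ℝ)-γ) := by rw [hKn]; linarith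
        exact pow_le_pow_left₀ hK0 hKub 2
      have hmono := intervalIntegral.integral_mono_on (by linarith)
        (hKintt x (by linarith) (le_refl r) (by linarith)) (isq_intable _ _ _) hptw
      rw [isq] at hmono
      rw [hRmpdef, hf1def]
      calc ∫ t in ((R:ℝ) - γ + δ)..r, (K t x)^2
          ≤ ((r - ((R:ℝ)-γ))^3 - (((R:ℝ)-γ+δ) - ((R:ℝ)-γ))^3)/3 := hmono
        _ = (((γ:ℝ)+(r - (R:ℝ)))^3 - δ^3)/3 := by ring
    -- assemble
    have i01 : IntervalIntegrable (fun t => (K t x)^2) volume 0 η :=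
      hKintt x (le_refl (0:ℝ)) (by linarith) hη0.le
    have i12 : IntervalIntegrable (fun t => (K t x)^2) volume η 1 :=
      hKintt x hη0.le (by linarith) hη1
    have i23 : IntervalIntegrable (fun t => (K t x)^2) volume 1 ((R:ℝ) - γ) :=
      hKintt x (by norm_num) (by linarith) ht3ge1
    have i34 : IntervalIntegrable (fun t => (K t x)^2) volume ((R:ℝ) - γ) ((R:ℝ) - γ + δ) :=
      hKintt x (by linarith) (by linarith) (by linarith)
    have i45 : IntervalIntegrable (fun t => (K t x)^2) volume ((R:ℝ) - γ + δ) r :=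
      hKintt x (by linarith) (le_refl r) (by linarith)
    have e1 := intervalIntegral.integral_add_adjacent_intervals i01 i12
    have e2 := intervalIntegral.integral_add_adjacent_intervals (i01.trans i12) i23
    have e3 := intervalIntegral.integral_add_adjacent_intervals
      ((i01.trans i12).trans i23) i34
    have e4 := intervalIntegral.integral_add_adjacent_intervals
      (((i01.trans i12).trans i23).trans i34) i45
    show (1/2 : ℝ) * ∫ t in (0:ℝ)..r, (K t x)^2 ≤ Wv/2
    have htotal : (∫ t in (0:ℝ)..r, (K t x)^2) =
        (∫ t in (0:ℝ)..η, (K t x)^2) + (∫ t in η..(1:ℝ), (K t x)^2)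
        + (∫ t in (1:ℝ)..((R:ℝ)-γ), (K t x)^2)
        + (∫ t in ((R:ℝ)-γ)..((R:ℝ)-γ+δ), (K t x)^2)
        + (∫ t in ((R:ℝ)-γ+δ)..r, (K t x)^2) := by
      rw [e1, e2, e3, e4]
    have hS := add_le_add (add_le_add (add_le_add (add_le_add hhead hgap) hbulk) hplat) hramp
    have hfin : (∫ t in (0:ℝ)..r, (K t x)^2) ≤ Hd + (1-η) + Mv*c3v + pv + Rmpv := by
      rw [htotal]
      exact hS
    have hWle : (∫ t in (0:ℝ)..r, (K t x)^2) ≤ Wv := by rw [hWvdef]; exact hfin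
    calc (1/2 : ℝ) * ∫ t in (0:ℝ)..r, (K t x)^2
        ≤ (1/2 : ℝ) * Wv := mul_le_mul_of_nonneg_left hWle (by norm_num)
      _ = Wv/2 := by ring
  -- lower bound for Z
  set C0 : ℝ≥0∞ := ENNReal.ofReal (Real.exp (-β * (Wv/2))) with hC0
  have hZlow : C0 * ENNReal.ofReal ((η/γ)^γ * δ^(R-γ)) ≤ Z := by
    have h1 : (∫⁻ x in Box, ENNReal.ofReal (Real.exp (-β * U x)) ∂volume) ≤ Z :=
      lintegral_mono_set hBoxΔ
    have hstep : (∫⁻ _ in Box, C0 ∂volume)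
        ≤ ∫⁻ x in Box, ENNReal.ofReal (Real.exp (-β * U x)) ∂volume := by
      refine lintegral_mono_ae ?_
      refine (ae_restrict_mem hBoxmeas).mono fun x hx => ?_
      rw [hC0]
      apply ENNReal.ofReal_le_ofReal
      apply Real.exp_le_exp.2
      have hU := hUhigh x hx
      nlinarith
    rw [setLIntegral_const, hBoxvol] at hstep
    exact hstep.trans h1
  -- key energy comparison
  have hkey : (1/2) * (((γ:ℝ)^2 - 1) * ((R:ℝ) - γ)) ≤ (γ:ℝ)^2 * r / 2 - Wv/2 := by
    have hke := key_energy (γ:ℝ) (R:ℝ) f1 hγ2R hR1γR hf10 hf11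
    rw [hWvdef, hHddef, hc3def, hpvdef, hRmpdef, hMv]
    have hrRf : r = (R:ℝ) + f1 := by rw [hf1def]; ring
    rw [hηdef, hδdef, hrRf]
    nlinarith [hke]
  -- real comparison of weights
  set e2v : ℝ := 2 * (R:ℝ) + (γ:ℝ) * Real.log (γ:ℝ) with he2v
  have hreal : Real.exp (-β * ((γ:ℝ)^2 * r / 2)) * (r ^ R / R.factorial)
      ≤ Real.exp (-β * (Wv/2)) * ((η/γ)^γ * δ^(R-γ))
        * (Real.exp (-(β / 2) * ((γ:ℝ)^2 - 1) * ((R:ℝ) - γ)) * Real.exp e2v) := by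
    have hA : Real.exp (-β * ((γ:ℝ)^2 * r / 2))
        ≤ Real.exp (-β * (Wv/2)) * Real.exp (-(β / 2) * ((γ:ℝ)^2 - 1) * ((R:ℝ) - γ)) := by
      rw [← Real.exp_add]
      apply Real.exp_le_exp.2
      have h := mul_le_mul_of_nonneg_left hkey hβ.le
      nlinarith
    have hB : r ^ R / R.factorial ≤ (η/γ)^γ * δ^(R-γ) * Real.exp e2v := by
      have h1 : r ^ R / R.factorial ≤ Real.exp r := JelliumAux.pow_div_factorial_le_exp r hr.le R
      have h2 : Real.exp r ≤ Real.exp ((R:ℝ) + 1) := Real.exp_le_exp.2 (by linarith)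
      have hg : Real.exp ((γ:ℝ) * Real.log (γ:ℝ)) = (γ:ℝ)^γ := by
        rw [Real.exp_nat_mul, Real.exp_log hγpos]
      have hη' : Real.exp (-(1:ℝ)/2) ≤ η := by rw [hηdef]; exact exp_half_le
      have hδ' : Real.exp (-(1:ℝ)) ≤ δ := by rw [hδdef]; exact exp_neg_one_le
      have hηγ : Real.exp (-((γ:ℝ)/2)) ≤ η^γ := by
        have hp := pow_le_pow_left₀ (Real.exp_pos (-(1:ℝ)/2)).le hη' γ
        have heq : Real.exp (-(1:ℝ)/2)^γ = Real.exp (-((γ:ℝ)/2)) := by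
          rw [← Real.exp_nat_mul]
          congr 1
          ring
        rw [← heq]
        exact hp
      have hcastRγ : (((R - γ : ℕ)):ℝ) = (R:ℝ) - γ := by rw [Nat.cast_sub hγR]
      have hδR : Real.exp (-((R:ℝ) - γ)) ≤ δ^(R-γ) := by
        have hp := pow_le_pow_left₀ (Real.exp_pos (-(1:ℝ))).le hδ' (R-γ)
        have heq : Real.exp (-(1:ℝ))^(R-γ) = Real.exp (-((R:ℝ) - γ)) := by
          rw [← Real.exp_nat_mul, hcastRγ]
          congr 1
          ring
        rw [← heq]
        exact hp
      have hexp2 : Real.exp e2v = Real.exp (2*(R:ℝ)) * (γ:ℝ)^γ := by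
        rw [he2v, Real.exp_add, hg]
      have hsplit2 : (η/γ)^γ * (γ:ℝ)^γ = η^γ := by
        rw [← mul_pow]
        congr 1
        field_simp
      have hmul := mul_le_mul hηγ hδR (Real.exp_pos _).le (by positivity)
      have hfinal : Real.exp ((R:ℝ)+1) ≤ (η^γ) * (δ^(R-γ)) * Real.exp (2*(R:ℝ)) := by
        have hstep1 : Real.exp ((R:ℝ)+1) ≤ Real.exp (-((γ:ℝ)/2) - ((R:ℝ)-γ) + 2*(R:ℝ)) :=
          Real.exp_le_exp.2 (by linarith)
        have hstep2 : Real.exp (-((γ:ℝ)/2) - ((R:ℝ)-γ) + 2*(R:ℝ))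
            = (Real.exp (-((γ:ℝ)/2)) * Real.exp (-((R:ℝ)-γ))) * Real.exp (2*(R:ℝ)) := by
          rw [← Real.exp_add, ← Real.exp_add]
          exact congrArg Real.exp (by ring)
        have hstep3 : (Real.exp (-((γ:ℝ)/2)) * Real.exp (-((R:ℝ)-γ))) * Real.exp (2*(R:ℝ))
            ≤ (η^γ * δ^(R-γ)) * Real.exp (2*(R:ℝ)) :=
          mul_le_mul_of_nonneg_right hmul (Real.exp_pos _).le
        calc Real.exp ((R:ℝ)+1)
            ≤ (Real.exp (-((γ:ℝ)/2)) * Real.exp (-((R:ℝ)-γ))) * Real.exp (2*(R:ℝ)) := by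
              rw [← hstep2]; exact hstep1
          _ ≤ (η^γ * δ^(R-γ)) * Real.exp (2*(R:ℝ)) := hstep3
      calc r ^ R / R.factorial ≤ Real.exp ((R:ℝ)+1) := h1.trans h2
        _ ≤ η^γ * δ^(R-γ) * Real.exp (2*(R:ℝ)) := hfinal
        _ = (η/γ)^γ * δ^(R-γ) * (Real.exp (2*(R:ℝ)) * (γ:ℝ)^γ) := by
            rw [← hsplit2]; ring
        _ = (η/γ)^γ * δ^(R-γ) * Real.exp e2v := by rw [hexp2]
    have hfin := mul_le_mul hA hB (by positivity) (by positivity)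
    calc Real.exp (-β * ((γ:ℝ)^2 * r / 2)) * (r ^ R / R.factorial)
        ≤ (Real.exp (-β * (Wv/2)) * Real.exp (-(β / 2) * ((γ:ℝ)^2 - 1) * ((R:ℝ) - γ)))
          * ((η/γ)^γ * δ^(R-γ) * Real.exp e2v) := hfin
      _ = Real.exp (-β * (Wv/2)) * ((η/γ)^γ * δ^(R-γ))
          * (Real.exp (-(β / 2) * ((γ:ℝ)^2 - 1) * ((R:ℝ) - γ)) * Real.exp e2v) := by ring
  -- ENNReal glue
  have hz0ne : (C0 * ENNReal.ofReal ((η/γ)^γ * δ^(R-γ))) ≠ 0 := by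
    rw [hC0]
    apply mul_ne_zero
    · exact (ENNReal.ofReal_pos.2 (Real.exp_pos _)).ne'
    · have hp : (0:ℝ) < (η/γ)^γ * δ^(R-γ) := by positivity
      exact (ENNReal.ofReal_pos.2 hp).ne'
  have hz0top : (C0 * ENNReal.ofReal ((η/γ)^γ * δ^(R-γ))) ≠ ⊤ :=
    ENNReal.mul_ne_top ENNReal.ofReal_ne_top ENNReal.ofReal_ne_top
  have hEN : C1 * ENNReal.ofReal (r ^ R / R.factorial)
      ≤ (C0 * ENNReal.ofReal ((η/γ)^γ * δ^(R-γ)))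
        * ENNReal.ofReal
          (Real.exp (-(β / 2) * ((γ:ℝ)^2 - 1) * ((R:ℝ) - γ)) * Real.exp e2v) := by
    rw [hC1, hC0, ← ENNReal.ofReal_mul (Real.exp_pos _).le,
      ← ENNReal.ofReal_mul (Real.exp_pos _).le, ← ENNReal.ofReal_mul (by positivity)]
    exact ENNReal.ofReal_le_ofReal hreal
  calc P Sev = Z⁻¹ * WD Sev := hPapp Sev
    _ ≤ Z⁻¹ * WD Bev := mul_le_mul_right (measure_mono hSB) _
    _ ≤ Z⁻¹ * (C1 * ENNReal.ofReal (r ^ R / R.factorial)) := mul_le_mul_right hWDB _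
    _ ≤ (C0 * ENNReal.ofReal ((η/γ)^γ * δ^(R-γ)))⁻¹
        * ((C0 * ENNReal.ofReal ((η/γ)^γ * δ^(R-γ)))
          * ENNReal.ofReal
            (Real.exp (-(β / 2) * ((γ:ℝ)^2 - 1) * ((R:ℝ) - γ)) * Real.exp e2v)) :=
        mul_le_mul' (ENNReal.inv_le_inv' hZlow) hEN
    _ = ENNReal.ofReal
          (Real.exp (-(β / 2) * ((γ:ℝ)^2 - 1) * ((R:ℝ) - γ)) * Real.exp e2v) := by
        rw [← mul_assoc, ENNReal.inv_mul_cancel hz0ne hz0top, one_mul]
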